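/- Let 𝒜 be an output AOE of the simplification algorithm and let Opt be an optimal AOE with Opt ≡ 𝒜, with common task set 𝒯. For distinct tasks T, T' ∈ 𝒯: if End_𝒜(T) ≠ St_𝒜(T') then End_Opt(T) ≠ St_Opt(T'). -/

import Mathlib

namespace AOEPaper

/-- An activity-on-edge graph: a directed multigraph on the vertex set `verts`,
whose task edges are indexed by the type `T` (the distinct task labels), each task `t`
being an edge from `St t` to `En t`, together with a multiset `unl` of unlabeled edges. -/
structure AOE (V T : Type) where
  verts : Finset V
  St : T → V
  En : T → V
  stMem : ∀ t, St t ∈ verts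
  enMem : ∀ t, En t ∈ verts
  unl : Multiset (V × V)
  unlMem : ∀ e ∈ unl, e.1 ∈ verts ∧ e.2 ∈ verts

/-- One-step adjacency: an unlabeled edge or a task edge from `a` to `b`. -/
def AOE.adj {V T : Type} (G : AOE V T) (a b : V) : Prop :=
  (a, b) ∈ G.unl ∨ ∃ t, G.St t = a ∧ G.En t = b

/-- The graph has no directed cycle. -/
def AOE.Acyclic {V T : Type} (G : AOE V T) : Prop :=
  ∀ v : V, ¬ Relation.TransGen G.adj v v

/-- Task `t` reaches task `t'`: `En t = St t'` or there is a directed path from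
`En t` to `St t'` (intended only for `t ≠ t'`). -/
def AOE.reach {V T : Type} (G : AOE V T) (t t' : T) : Prop :=
  Relation.ReflTransGen G.adj (G.En t) (G.St t')

/-- A sequence of tasks in which each task reaches the next. -/
def AOE.chain {V T : Type} (G : AOE V T) (l : List T) : Prop :=
  l.Chain' fun t t' => t ≠ t' ∧ G.reach t t'

/-- A potential critical path: a maximal sequence of tasks in which each task
reaches the next (not a subsequence of any other such sequence). -/
def AOE.critPath {V T : Type} (G : AOE V T) (l : List T) : Prop :=
  G.chain l ∧ ∀ l' : List T, G.chain l' → l.Sublist l' → l' = l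

/-- Two AOEs with the same task labels are equivalent if they have the same set of
potential critical paths. -/
def AOE.Equiv {V W T : Type} (G : AOE V T) (H : AOE W T) : Prop :=
  ∀ l : List T, G.critPath l ↔ H.critPath l

/-- An AOE is optimal if it minimizes the number of vertices in its equivalence class. -/
def Optimal {W T : Type} (G : AOE W T) : Prop :=
  ∀ (U : Type) (H : AOE U T), H.Acyclic → AOE.Equiv G H → G.verts.card ≤ H.verts.card

/-- The vertex map replacing `v` by `u`. -/
def mergeV {V : Type} [DecidableEq V] (u v x : V) : V := if x = v then u else x

theorem mergeV_mem {V : Type} [DecidableEq V] {S : Finset V} (u v x : V) (hx : x ∈ S) :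
    mergeV u v x ∈ insert u (S.erase v) := by
  unfold mergeV
  split_ifs with h
  · exact Finset.mem_insert_self _ _
  · exact Finset.mem_insert_of_mem (Finset.mem_erase.mpr ⟨h, hx⟩)

/-- Merge vertices `u` and `v` into the single vertex `u`. -/
def AOE.merge {V T : Type} [DecidableEq V] (G : AOE V T) (u v : V) : AOE V T where
  verts := insert u (G.verts.erase v)
  St t := mergeV u v (G.St t)
  En t := mergeV u v (G.En t)
  stMem t := mergeV_mem u v (G.St t) (G.stMem t)
  enMem t := mergeV_mem u v (G.En t) (G.enMem t)
  unl := G.unl.map fun e => (mergeV u v e.1, mergeV u v e.2)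
  unlMem := by
    intro e he
    rw [Multiset.mem_map] at he
    obtain ⟨a, ha, rfl⟩ := he
    obtain ⟨h1, h2⟩ := G.unlMem a ha
    exact ⟨mergeV_mem u v a.1 h1, mergeV_mem u v a.2 h2⟩

/-- Delete one copy of the unlabeled edge `(u, v)`. -/
def AOE.delUnl {V T : Type} [DecidableEq V] (G : AOE V T) (u v : V) : AOE V T where
  verts := G.verts
  St := G.St
  En := G.En
  stMem := G.stMem
  enMem := G.enMem
  unl := G.unl.erase (u, v)
  unlMem := fun e he => G.unlMem e (Multiset.mem_of_mem_erase he)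

/-- Rule 1 (outgoing version): `u` and `v` are distinct vertices with no outgoing task
edges and precisely the same outgoing neighbors. -/
def Rule1OutCond {V T : Type} (G : AOE V T) (u v : V) : Prop :=
  u ∈ G.verts ∧ v ∈ G.verts ∧ u ≠ v ∧
    (∀ t, G.St t ≠ u) ∧ (∀ t, G.St t ≠ v) ∧ ∀ w, G.adj u w ↔ G.adj v w

/-- Rule 1 (incoming version): `u` and `v` are distinct vertices with no incoming task
edges and precisely the same incoming neighbors. -/
def Rule1InCond {V T : Type} (G : AOE V T) (u v : V) : Prop :=
  u ∈ G.verts ∧ v ∈ G.verts ∧ u ≠ v ∧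
    (∀ t, G.En t ≠ u) ∧ (∀ t, G.En t ≠ v) ∧ ∀ w, G.adj w u ↔ G.adj w v

/-- Rule 2: `(u, v)` is an unlabeled edge and there is another directed path from `u`
to `v` not using this edge. -/
def Rule2Cond {V T : Type} [DecidableEq V] (G : AOE V T) (u v : V) : Prop :=
  (u, v) ∈ G.unl ∧ Relation.TransGen (G.delUnl u v).adj u v

/-- Rule 3: `(u, v)` is an unlabeled edge such that (i) there is no other path from `u`
to `v`; (ii) if `u` has an outgoing task then `v` has no incoming edge other than `(u,v)`;
(iii) if `v` has an incoming task then `u` has no outgoing edge other than `(u,v)`;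
(iv) every incoming neighbor of `v` has a path to every outgoing neighbor of `u`. -/
def Rule3Cond {V T : Type} [DecidableEq V] (G : AOE V T) (u v : V) : Prop :=
  (u, v) ∈ G.unl ∧
  (¬ Relation.TransGen (G.delUnl u v).adj u v) ∧
  ((∃ t, G.St t = u) → (∀ t, G.En t ≠ v) ∧ ∀ w, (w, v) ∈ G.unl → w = u) ∧
  ((∃ t, G.En t = v) → (∀ t, G.St t ≠ u) ∧ ∀ w, (u, w) ∈ G.unl → w = v) ∧
  ∀ w z, G.adj w v → G.adj u z → Relation.ReflTransGen G.adj w z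

/-- One application of a simplification rule. -/
inductive Step {V T : Type} [DecidableEq V] : AOE V T → AOE V T → Prop
  | rule1out {G : AOE V T} (u v : V) : Rule1OutCond G u v → Step G (G.merge u v)
  | rule1in {G : AOE V T} (u v : V) : Rule1InCond G u v → Step G (G.merge u v)
  | rule2 {G : AOE V T} (u v : V) : Rule2Cond G u v → Step G (G.delUnl u v)
  | rule3 {G : AOE V T} (u v : V) : Rule3Cond G u v → Step G ((G.delUnl u v).merge u v)

/-- A canonical AOE: the naive expansion of an activity-on-node graph. Each task has its
own pair of endpoint vertices, all pairwise distinct; there are a global start vertex `s`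
and a global end vertex `e`; unlabeled edges other than those leaving `s` or entering `e`
go from end vertices of tasks to start vertices of tasks; `s` has unlabeled edges to
exactly the vertices whose only incoming edges come from `s`, and `e` has unlabeled edges
from exactly the vertices whose only outgoing edges go to `e`. -/
def Canonical {V T : Type} [DecidableEq V] [Fintype T] (G : AOE V T) : Prop :=
  G.Acyclic ∧ G.unl.Nodup ∧
  Function.Injective G.St ∧ Function.Injective G.En ∧
  (∀ t t' : T, G.St t ≠ G.En t') ∧
  ∃ s e : V, s ≠ e ∧ s ∈ G.verts ∧ e ∈ G.verts ∧
    (∀ t, G.St t ≠ s ∧ G.St t ≠ e ∧ G.En t ≠ s ∧ G.En t ≠ e) ∧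
    (G.verts =
      insert s (insert e (Finset.image G.St Finset.univ ∪ Finset.image G.En Finset.univ))) ∧
    (∀ a b : V, (a, b) ∈ G.unl → a ≠ s → b ≠ e → (∃ t, G.En t = a) ∧ ∃ t', G.St t' = b) ∧
    (∀ b : V, (s, b) ∈ G.unl ↔
      b ∈ G.verts ∧ b ≠ s ∧ (∀ t, G.En t ≠ b) ∧ ∀ a, (a, b) ∈ G.unl → a = s) ∧
    (∀ a : V, (a, e) ∈ G.unl ↔
      a ∈ G.verts ∧ a ≠ e ∧ (∀ t, G.St t ≠ a) ∧ ∀ b, (a, b) ∈ G.unl → b = e)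

/-- An output AOE: obtained from a canonical AOE by a finite sequence of rule
applications, such that no rule can still be applied. -/
def IsOutput {V T : Type} [DecidableEq V] [Fintype T] (G A : AOE V T) : Prop :=
  Canonical G ∧ Relation.ReflTransGen Step G A ∧ ∀ B : AOE V T, ¬ Step A B

theorem mergeSetV_mem {V : Type} [DecidableEq V] {S : Finset V} (C : Finset V) (c x : V)
    (hx : x ∈ S) : (if x ∈ C then c else x) ∈ insert c (S \ C) := by
  split_ifs with h
  · exact Finset.mem_insert_self _ _
  · exact Finset.mem_insert_of_mem (Finset.mem_sdiff.mpr ⟨hx, h⟩)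

/-- Merge all vertices of `C` into the single vertex `c`. -/
def AOE.mergeSet {V T : Type} [DecidableEq V] (G : AOE V T) (C : Finset V) (c : V) :
    AOE V T where
  verts := insert c (G.verts \ C)
  St t := if G.St t ∈ C then c else G.St t
  En t := if G.En t ∈ C then c else G.En t
  stMem t := mergeSetV_mem C c (G.St t) (G.stMem t)
  enMem t := mergeSetV_mem C c (G.En t) (G.enMem t)
  unl := G.unl.map fun e => (if e.1 ∈ C then c else e.1, if e.2 ∈ C then c else e.2)
  unlMem := by
    intro e he
    rw [Multiset.mem_map] at he
    obtain ⟨a, ha, rfl⟩ := he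
    obtain ⟨h1, h2⟩ := G.unlMem a ha
    exact ⟨mergeSetV_mem C c a.1 h1, mergeSetV_mem C c a.2 h2⟩

open Relation List

section Dev
variable {V T : Type}

lemma AOE.adj_mem {G : AOE V T} {a b : V} (h : G.adj a b) : a ∈ G.verts ∧ b ∈ G.verts := by
  rcases h with h | ⟨t, rfl, rfl⟩
  · exact G.unlMem _ h
  · exact ⟨G.stMem t, G.enMem t⟩

lemma AOE.adj_task {G : AOE V T} (t : T) : G.adj (G.St t) (G.En t) := Or.inr ⟨t, rfl, rfl⟩

variable [DecidableEq V]

lemma mergeV_left (u v : V) : mergeV u v u = u := by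
  unfold mergeV; split_ifs <;> rfl

lemma mergeV_right (u v : V) : mergeV u v v = u := if_pos rfl

lemma mergeV_ne {u v x : V} (h : x ≠ v) : mergeV u v x = x := if_neg h

lemma mergeV_eq_cases {u v x y : V} (h : mergeV u v x = mergeV u v y) :
    x = y ∨ ((x = u ∨ x = v) ∧ (y = u ∨ y = v)) := by
  by_cases hx : x = v <;> by_cases hy : y = v <;>
    simp only [mergeV, if_pos, if_neg, hx, hy, if_true, if_false] at h
  · exact Or.inr ⟨Or.inr hx, Or.inr hy⟩
  · exact Or.inr ⟨Or.inr hx, Or.inl h.symm⟩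
  · exact Or.inr ⟨Or.inl h, Or.inr hy⟩
  · exact Or.inl h

lemma merge_adj_elim {G : AOE V T} {u v p q : V} (h : (G.merge u v).adj p q) :
    ∃ x y, G.adj x y ∧ mergeV u v x = p ∧ mergeV u v y = q := by
  rcases h with h | ⟨t, ht1, ht2⟩
  · obtain ⟨⟨x, y⟩, hm, he⟩ := Multiset.mem_map.mp h
    obtain ⟨h1, h2⟩ := Prod.ext_iff.mp he
    exact ⟨x, y, Or.inl hm, h1, h2⟩
  · exact ⟨G.St t, G.En t, AOE.adj_task t, ht1, ht2⟩

lemma merge_adj_img {G : AOE V T} {u v x y : V} (h : G.adj x y) :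
    (G.merge u v).adj (mergeV u v x) (mergeV u v y) := by
  rcases h with h | ⟨t, rfl, rfl⟩
  · exact Or.inl (Multiset.mem_map.mpr ⟨(x, y), h, rfl⟩)
  · exact Or.inr ⟨t, rfl, rfl⟩

lemma merge_reach_img {G : AOE V T} {u v x y : V} (h : ReflTransGen G.adj x y) :
    ReflTransGen (G.merge u v).adj (mergeV u v x) (mergeV u v y) := by
  induction h with
  | refl => exact .refl
  | tail _ h2 ih => exact ih.tail (merge_adj_img h2)

lemma merge_verts_elim {G : AOE V T} {u v : V} (hu : u ∈ G.verts) {w : V}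
    (hw : w ∈ (G.merge u v).verts) : ∃ x ∈ G.verts, mergeV u v x = w := by
  rcases Finset.mem_insert.mp hw with h | hw
  · exact ⟨u, hu, (mergeV_left u v).trans h.symm⟩
  · obtain ⟨hne, hmem⟩ := Finset.mem_erase.mp hw
    exact ⟨w, hmem, mergeV_ne hne⟩

lemma delUnl_adj_le {G : AOE V T} {u v a b : V} (h : (G.delUnl u v).adj a b) : G.adj a b := by
  rcases h with h | h
  · exact Or.inl (Multiset.mem_of_mem_erase h)
  · exact Or.inr h

lemma adj_delUnl_of_ne {G : AOE V T} {u v a b : V} (h : G.adj a b) (hne : (a, b) ≠ (u, v)) :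
    (G.delUnl u v).adj a b := by
  rcases h with h | h
  · exact Or.inl ((Multiset.mem_erase_of_ne hne).mpr h)
  · exact Or.inr h

lemma rule2_adj_reach {G : AOE V T} {u v : V} (hp : TransGen (G.delUnl u v).adj u v)
    {a b : V} (h : G.adj a b) : ReflTransGen (G.delUnl u v).adj a b := by
  by_cases he : (a, b) = (u, v)
  · obtain ⟨h1, h2⟩ := Prod.ext_iff.mp he
    subst h1; subst h2; exact hp.to_reflTransGen
  · exact .single (adj_delUnl_of_ne h he)

lemma rule2_reach {G : AOE V T} {u v : V} (hp : TransGen (G.delUnl u v).adj u v)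
    {x y : V} (h : ReflTransGen G.adj x y) : ReflTransGen (G.delUnl u v).adj x y := by
  induction h with
  | refl => exact .refl
  | tail _ h2 ih => exact ih.trans (rule2_adj_reach hp h2)

lemma rule3_adj_img {G : AOE V T} {u v x y : V} (h : G.adj x y) :
    ReflTransGen ((G.delUnl u v).merge u v).adj (mergeV u v x) (mergeV u v y) := by
  by_cases he : (x, y) = (u, v)
  · obtain ⟨h1, h2⟩ := Prod.ext_iff.mp he
    subst h1; subst h2
    rw [mergeV_left, mergeV_right]
  · exact .single (merge_adj_img (adj_delUnl_of_ne h he))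

lemma rule3_reach_img {G : AOE V T} {u v x y : V} (h : ReflTransGen G.adj x y) :
    ReflTransGen ((G.delUnl u v).merge u v).adj (mergeV u v x) (mergeV u v y) := by
  induction h with
  | refl => exact .refl
  | tail _ h2 ih => exact ih.trans (rule3_adj_img h2)

/-- Lift of a transitive path in a merged graph. -/
lemma merge_lift {H : AOE V T} {u v p q : V} (h : TransGen (H.merge u v).adj p q) :
    ∃ x y, mergeV u v x = p ∧ mergeV u v y = q ∧
      TransGen (fun a b => ∃ c, mergeV u v a = mergeV u v c ∧ H.adj c b) x y := by
  induction h with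
  | single h1 =>
    obtain ⟨x, y, hxy, hx, hy⟩ := merge_adj_elim h1
    exact ⟨x, y, hx, hy, .single ⟨x, rfl, hxy⟩⟩
  | tail _ h2 ih =>
    obtain ⟨x, y, hx, hy, ht⟩ := ih
    obtain ⟨c, d, hcd, hc, hd⟩ := merge_adj_elim h2
    exact ⟨x, d, hx, hd, ht.tail ⟨c, hy.trans hc.symm, hcd⟩⟩

lemma acyclic_delUnl {G : AOE V T} (hG : G.Acyclic) (u v : V) : (G.delUnl u v).Acyclic :=
  fun w hw => hG w (TransGen.mono (fun _ _ h => delUnl_adj_le h) _ _ hw)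

lemma acyclic_merge_out {G : AOE V T} {u v : V} (cond : Rule1OutCond G u v)
    (hG : G.Acyclic) : (G.merge u v).Acyclic := by
  obtain ⟨-, -, -, -, -, hnb⟩ := cond
  intro p hp
  obtain ⟨x, y, hx, hy, ht⟩ := merge_lift hp
  have hsub : ∀ a b, (∃ c, mergeV u v a = mergeV u v c ∧ G.adj c b) → G.adj a b := by
    rintro a b ⟨c, hfc, hadj⟩
    rcases mergeV_eq_cases hfc with rfl | ⟨ha, hc⟩
    · exact hadj
    · rcases ha with rfl | rfl <;> rcases hc with rfl | rfl
      · exact hadj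
      · exact (hnb b).mpr hadj
      · exact (hnb b).mp hadj
      · exact hadj
  have ht' : TransGen G.adj x y := TransGen.mono hsub _ _ ht
  rcases mergeV_eq_cases (hx.trans hy.symm) with rfl | ⟨hx', hy'⟩
  · exact hG x ht'
  · obtain ⟨b, hb1, hb2⟩ := (TransGen.head'_iff).mp ht'
    have hb1' : G.adj y b := by
      rcases hx' with rfl | rfl <;> rcases hy' with rfl | rfl
      · exact hb1
      · exact (hnb b).mp hb1
      · exact (hnb b).mpr hb1
      · exact hb1
    exact hG y (TransGen.head' hb1' hb2)

lemma acyclic_merge_in {G : AOE V T} {u v : V} (cond : Rule1InCond G u v)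
    (hG : G.Acyclic) : (G.merge u v).Acyclic := by
  obtain ⟨-, -, -, -, -, hnb⟩ := cond
  intro p hp
  obtain ⟨x, y, hx, hy, ht⟩ := merge_lift hp
  -- push the equivalence jumps backwards into the preceding edge
  have key : ∀ x y, TransGen (fun a b => ∃ c, mergeV u v a = mergeV u v c ∧ G.adj c b) x y →
      ∃ c, mergeV u v x = mergeV u v c ∧ TransGen G.adj c y := by
    intro x y h
    induction h with
    | single h1 =>
      obtain ⟨c, hfc, hadj⟩ := h1
      exact ⟨c, hfc, .single hadj⟩
    | tail _ h2 ih =>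
      obtain ⟨c, hfc, hct⟩ := ih
      obtain ⟨c', hfc', hadj'⟩ := h2
      rcases mergeV_eq_cases hfc' with rfl | ⟨hy', hc''⟩
      · exact ⟨c, hfc, hct.tail hadj'⟩
      · obtain ⟨b, hb1, hb2⟩ := (TransGen.tail'_iff).mp hct
        have hb2' : G.adj b c' := by
          rcases hy' with rfl | rfl <;> rcases hc'' with rfl | rfl
          · exact hb2
          · exact (hnb b).mp hb2
          · exact (hnb b).mpr hb2
          · exact hb2
        exact ⟨c, hfc, (TransGen.tail' hb1 hb2').tail hadj'⟩
  obtain ⟨c, hfc, hct⟩ := key x y ht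
  rcases mergeV_eq_cases ((hy.trans hx.symm).trans hfc) with rfl | ⟨hy', hc'⟩
  · exact hG y hct
  · obtain ⟨b, hb1, hb2⟩ := (TransGen.tail'_iff).mp hct
    have hb2' : G.adj b c := by
      rcases hy' with rfl | rfl <;> rcases hc' with rfl | rfl
      · exact hb2
      · exact (hnb b).mp hb2
      · exact (hnb b).mpr hb2
      · exact hb2
    exact hG c (TransGen.tail' hb1 hb2')

end Dev

section Dev2
variable {V T : Type} [DecidableEq V]

lemma acyclic_rule3 {G : AOE V T} {u v : V} (cond : Rule3Cond G u v)
    (hG : G.Acyclic) : ((G.delUnl u v).merge u v).Acyclic := by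
  obtain ⟨hmem, hnp, -, -, -⟩ := cond
  set H : AOE V T := G.delUnl u v with hH
  have hA : H.Acyclic := acyclic_delUnl hG u v
  have hB : ¬ TransGen H.adj u v := hnp
  have hC : ¬ TransGen H.adj v u := by
    intro h
    exact hG u (TransGen.head' (Or.inl hmem) ((TransGen.mono (fun _ _ hh => delUnl_adj_le hh) _ _ h).to_reflTransGen))
  intro p hp
  obtain ⟨x, y, hx, hy, ht⟩ := merge_lift hp
  -- structure lemma: at most one u/v swap can occur
  have S : ∀ x y, TransGen (fun a b => ∃ c, mergeV u v a = mergeV u v c ∧ H.adj c b) x y →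
      TransGen H.adj x y ∨ ∃ a b, ((a = u ∧ b = v) ∨ (a = v ∧ b = u)) ∧
        ReflTransGen H.adj x a ∧ TransGen H.adj b y := by
    intro x y h
    have pairs : ∀ a c : V, mergeV u v a = mergeV u v c → a ≠ c →
        (a = u ∧ c = v) ∨ (a = v ∧ c = u) := by
      intro a c hfc hne
      rcases mergeV_eq_cases hfc with h | ⟨ha, hc⟩
      · exact absurd h hne
      · rcases ha with rfl | rfl <;> rcases hc with rfl | rfl
        · exact absurd rfl hne
        · exact Or.inl ⟨rfl, rfl⟩
        · exact Or.inr ⟨rfl, rfl⟩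
        · exact absurd rfl hne
    have noseg : ∀ a b : V, ((a = u ∧ b = v) ∨ (a = v ∧ b = u)) → ¬ TransGen H.adj b a := by
      rintro a b (⟨rfl, rfl⟩ | ⟨rfl, rfl⟩)
      · exact hC
      · exact hB
    induction h with
    | single h1 =>
      obtain ⟨c, hfc, hadj⟩ := h1
      by_cases hac : x = c
      · subst hac; exact Or.inl (.single hadj)
      · exact Or.inr ⟨x, c, pairs x c hfc hac, .refl, .single hadj⟩
    | tail hpre h2 ih =>
      rename_i ymid z
      obtain ⟨c, hfc, hadj⟩ := h2
      by_cases hac : ymid = c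
      · subst hac
        rcases ih with h | ⟨a, b, hab, h1, h2'⟩
        · exact Or.inl (h.tail hadj)
        · exact Or.inr ⟨a, b, hab, h1, h2'.tail hadj⟩
      · have hpair := pairs ymid c hfc hac
        rcases ih with h | ⟨a, b, hab, h1, h2'⟩
        · exact Or.inr ⟨ymid, c, hpair, h.to_reflTransGen, .single hadj⟩
        · -- middle segment from b to ymid between {u,v}: contradiction
          exfalso
          by_cases hbm : b = ymid
          · subst hbm; exact hA b h2'
          · have : (b = u ∧ ymid = v) ∨ (b = v ∧ ymid = u) := by
              rcases hab with ⟨rfl, rfl⟩ | ⟨rfl, rfl⟩ <;>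
                rcases hpair with ⟨rfl, h⟩ | ⟨rfl, h⟩ <;> simp_all
            rcases this with ⟨rfl, rfl⟩ | ⟨rfl, rfl⟩
            · exact hB h2'
            · exact hC h2'
  have hfxy : mergeV u v x = mergeV u v y := hx.trans hy.symm
  rcases S x y ht with h | ⟨a, b, hab, h1, h2'⟩
  · rcases mergeV_eq_cases hfxy with rfl | ⟨hx', hy'⟩
    · exact hA x h
    · by_cases hxy : x = y
      · subst hxy; exact hA x h
      · rcases hx' with rfl | rfl <;> rcases hy' with rfl | rfl
        · exact hA _ h
        · exact hB h
        · exact hC h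
        · exact hA _ h
  · rcases mergeV_eq_cases hfxy with rfl | ⟨hx', hy'⟩
    · -- x = y: b →+ y = x →* a, with (a,b) a swap pair
      rcases hab with ⟨rfl, rfl⟩ | ⟨rfl, rfl⟩
      · exact hC (h2'.trans_left h1)
      · exact hB (h2'.trans_left h1)
    · -- x ≠ y possibly, both in {u,v}
      by_cases hby : b = y
      · subst hby; exact hA b h2'
      · have hb' : b = u ∨ b = v := by
          rcases hab with ⟨rfl, rfl⟩ | ⟨rfl, rfl⟩ <;> simp
        have : (b = u ∧ y = v) ∨ (b = v ∧ y = u) := by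
          rcases hb' with rfl | rfl <;> rcases hy' with rfl | rfl <;> simp_all
        rcases this with ⟨rfl, rfl⟩ | ⟨rfl, rfl⟩
        · exact hB h2'
        · exact hC h2'

end Dev2

section Dev3
variable {V T : Type}

/-- Invariant: the tail of every unlabeled edge is the end of some task, or reaches
every vertex. -/
def K3out (H : AOE V T) : Prop :=
  ∀ a b : V, (a, b) ∈ H.unl →
    (∃ s, H.En s = a) ∨ (∀ w ∈ H.verts, Relation.ReflTransGen H.adj a w)

/-- Invariant: the head of every unlabeled edge is the start of some task, or is
reached from every vertex. -/
def K3in (H : AOE V T) : Prop :=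
  ∀ a b : V, (a, b) ∈ H.unl →
    (∃ s, H.St s = b) ∨ (∀ w ∈ H.verts, Relation.ReflTransGen H.adj w b)

variable [DecidableEq V]

lemma K3out_merge {G : AOE V T} {u v : V} (hu : u ∈ G.verts) (h : K3out G) :
    K3out (G.merge u v) := by
  rintro p q hpq
  obtain ⟨⟨a, b⟩, hab, he⟩ := Multiset.mem_map.mp hpq
  have h1 : mergeV u v a = p := congrArg Prod.fst he
  have h2 : mergeV u v b = q := congrArg Prod.snd he
  rcases h a b hab with ⟨s, hs⟩ | hra
  · exact Or.inl ⟨s, by rw [show (G.merge u v).En s = mergeV u v (G.En s) from rfl, hs, h1]⟩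
  · refine Or.inr fun w hw => ?_
    obtain ⟨x, hx, rfl⟩ := merge_verts_elim hu hw
    rw [← h1]
    exact merge_reach_img (hra x hx)

lemma K3in_merge {G : AOE V T} {u v : V} (hu : u ∈ G.verts) (h : K3in G) :
    K3in (G.merge u v) := by
  rintro p q hpq
  obtain ⟨⟨a, b⟩, hab, he⟩ := Multiset.mem_map.mp hpq
  have h1 : mergeV u v a = p := congrArg Prod.fst he
  have h2 : mergeV u v b = q := congrArg Prod.snd he
  rcases h a b hab with ⟨s, hs⟩ | hra
  · exact Or.inl ⟨s, by rw [show (G.merge u v).St s = mergeV u v (G.St s) from rfl, hs, h2]⟩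
  · refine Or.inr fun w hw => ?_
    obtain ⟨x, hx, rfl⟩ := merge_verts_elim hu hw
    rw [← h2]
    exact merge_reach_img (hra x hx)

lemma K3out_rule2 {G : AOE V T} {u v : V} (hp : Relation.TransGen (G.delUnl u v).adj u v)
    (h : K3out G) : K3out (G.delUnl u v) := by
  rintro a b hab
  rcases h a b (Multiset.mem_of_mem_erase hab) with ⟨s, hs⟩ | hra
  · exact Or.inl ⟨s, hs⟩
  · exact Or.inr fun w hw => rule2_reach hp (hra w hw)

lemma K3in_rule2 {G : AOE V T} {u v : V} (hp : Relation.TransGen (G.delUnl u v).adj u v)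
    (h : K3in G) : K3in (G.delUnl u v) := by
  rintro a b hab
  rcases h a b (Multiset.mem_of_mem_erase hab) with ⟨s, hs⟩ | hra
  · exact Or.inl ⟨s, hs⟩
  · exact Or.inr fun w hw => rule2_reach hp (hra w hw)

lemma K3out_rule3 {G : AOE V T} {u v : V} (hm : (u, v) ∈ G.unl) (h : K3out G) :
    K3out ((G.delUnl u v).merge u v) := by
  have hu : u ∈ G.verts := (G.unlMem _ hm).1
  rintro p q hpq
  obtain ⟨⟨a, b⟩, hab, he⟩ := Multiset.mem_map.mp hpq
  have h1 : mergeV u v a = p := congrArg Prod.fst he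
  have h2 : mergeV u v b = q := congrArg Prod.snd he
  rcases h a b (Multiset.mem_of_mem_erase hab) with ⟨s, hs⟩ | hra
  · exact Or.inl ⟨s, by
      rw [show ((G.delUnl u v).merge u v).En s = mergeV u v (G.En s) from rfl, hs, h1]⟩
  · refine Or.inr fun w hw => ?_
    obtain ⟨x, hx, rfl⟩ := merge_verts_elim (show u ∈ (G.delUnl u v).verts from hu) hw
    rw [← h1]
    exact rule3_reach_img (hra x hx)

lemma K3in_rule3 {G : AOE V T} {u v : V} (hm : (u, v) ∈ G.unl) (h : K3in G) :
    K3in ((G.delUnl u v).merge u v) := by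
  have hu : u ∈ G.verts := (G.unlMem _ hm).1
  rintro p q hpq
  obtain ⟨⟨a, b⟩, hab, he⟩ := Multiset.mem_map.mp hpq
  have h1 : mergeV u v a = p := congrArg Prod.fst he
  have h2 : mergeV u v b = q := congrArg Prod.snd he
  rcases h a b (Multiset.mem_of_mem_erase hab) with ⟨s, hs⟩ | hra
  · exact Or.inl ⟨s, by
      rw [show ((G.delUnl u v).merge u v).St s = mergeV u v (G.St s) from rfl, hs, h2]⟩
  · refine Or.inr fun w hw => ?_
    obtain ⟨x, hx, rfl⟩ := merge_verts_elim (show u ∈ (G.delUnl u v).verts from hu) hw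
    rw [← h2]
    exact rule3_reach_img (hra x hx)

/-- The combined invariant preserved by the simplification rules. -/
def Inv (H : AOE V T) : Prop := H.Acyclic ∧ K3out H ∧ K3in H

lemma step_inv {G H : AOE V T} (h : Step G H) (hG : Inv G) : Inv H := by
  obtain ⟨hac, ho, hi⟩ := hG
  cases h with
  | rule1out u v cond =>
    exact ⟨acyclic_merge_out cond hac, K3out_merge cond.1 ho, K3in_merge cond.1 hi⟩
  | rule1in u v cond =>
    exact ⟨acyclic_merge_in cond hac, K3out_merge cond.1 ho, K3in_merge cond.1 hi⟩
  | rule2 u v cond =>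
    exact ⟨acyclic_delUnl hac u v, K3out_rule2 cond.2 ho, K3in_rule2 cond.2 hi⟩
  | rule3 u v cond =>
    exact ⟨acyclic_rule3 cond hac, K3out_rule3 cond.1 ho, K3in_rule3 cond.1 hi⟩

lemma steps_inv {G A : AOE V T} (h : Relation.ReflTransGen Step G A) (hG : Inv G) : Inv A := by
  induction h with
  | refl => exact hG
  | tail _ h2 ih => exact step_inv h2 ih

end Dev3

section Dev4
variable {V W T : Type}

lemma chain_cons_elim {H : AOE V T} {a c : T} {l : List T}
    (h : H.chain (a :: c :: l)) : (a ≠ c ∧ H.reach a c) ∧ H.chain (c :: l) :=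
  List.isChain_cons_cons.mp h

lemma chain_tail {H : AOE V T} {a : T} {l : List T} (h : H.chain (a :: l)) : H.chain l :=
  List.IsChain.tail h

lemma reach_of_chain_cons {H : AOE V T} {l : List T} :
    ∀ {a : T}, H.chain (a :: l) → ∀ b ∈ l, Relation.ReflTransGen H.adj (H.En a) (H.St b) := by
  induction l with
  | nil => intro a _ b hb; cases hb
  | cons c l' ih =>
    intro a h b hb
    obtain ⟨⟨hne, hr⟩, hc⟩ := chain_cons_elim h
    rcases List.mem_cons.mp hb with rfl | hb'
    · exact hr
    · exact (hr.tail (AOE.adj_task c)).trans (ih hc b hb')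

lemma reach_of_sublist {H : AOE V T} {a b : T} :
    ∀ {l : List T}, H.chain l → List.Sublist [a, b] l →
      Relation.ReflTransGen H.adj (H.En a) (H.St b) := by
  intro l
  induction l with
  | nil => intro _ hs; cases hs
  | cons x l' ih =>
    intro hc hs
    cases hs with
    | cons _ h => exact ih (chain_tail hc) h
    | cons_cons _ h => exact reach_of_chain_cons hc b (List.singleton_sublist.mp h)

lemma chain_nodup {H : AOE V T} (hH : H.Acyclic) {l : List T} (hc : H.chain l) : l.Nodup := by
  rw [List.nodup_iff_sublist]
  intro a ha
  exact hH _ (Relation.TransGen.tail' (reach_of_sublist hc ha) (AOE.adj_task a))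

lemma exists_critPath [Fintype T] {H : AOE V T} (hH : H.Acyclic) :
    ∀ (k : ℕ) (l : List T), H.chain l → Fintype.card T ≤ k + l.length →
      ∃ l', H.critPath l' ∧ List.Sublist l l' := by
  intro k
  induction k with
  | zero =>
    intro l hc hlen
    refine ⟨l, ⟨hc, fun l'' hc'' hs => ?_⟩, List.Sublist.refl l⟩
    exact (hs.eq_of_length (Nat.le_antisymm hs.length_le
      ((chain_nodup hH hc'').length_le_card.trans (by omega)))).symm
  | succ k ih =>
    intro l hc hlen
    by_cases hcp : H.critPath l
    · exact ⟨l, hcp, List.Sublist.refl l⟩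
    · have hex : ∃ l'', H.chain l'' ∧ List.Sublist l l'' ∧ l'' ≠ l := by
        unfold AOE.critPath at hcp
        push_neg at hcp
        exact hcp hc
      obtain ⟨l'', h1, h2, h3⟩ := hex
      have hlt : l.length < l''.length :=
        lt_of_le_of_ne h2.length_le fun he => h3 (h2.eq_of_length he).symm
      obtain ⟨l', hl', hs⟩ := ih l'' h1 (by omega)
      exact ⟨l', hl', h2.trans hs⟩

lemma reach_transfer [Fintype T] {H : AOE V T} {H' : AOE W T} (hH : H.Acyclic)
    (heq : ∀ l, H.critPath l ↔ H'.critPath l) {a b : T} (hab : a ≠ b) (h : H.reach a b) :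
    H'.reach a b := by
  have hc : H.chain [a, b] := List.isChain_pair.mpr ⟨hab, h⟩
  obtain ⟨l', hcp, hs⟩ := exists_critPath hH (Fintype.card T) [a, b] hc (by simp)
  exact reach_of_sublist ((heq l').mp hcp).1 hs

end Dev4

section Dev5
variable {V T : Type} [DecidableEq V] [Fintype T]

lemma canonical_inv {G : AOE V T} (h : Canonical G) : Inv G := by
  obtain ⟨hac, hnd, hiS, hiE, hSE, s, e, hse, hsv, hev, hdist, hverts, hgen, hscond, hecond⟩ := h
  -- membership case analysis
  have hcases : ∀ v ∈ G.verts, v = s ∨ v = e ∨ (∃ t, G.St t = v) ∨ (∃ t, G.En t = v) := by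
    intro v hv
    rw [hverts] at hv
    rcases Finset.mem_insert.mp hv with rfl | hv
    · exact Or.inl rfl
    rcases Finset.mem_insert.mp hv with rfl | hv
    · exact Or.inr (Or.inl rfl)
    rcases Finset.mem_union.mp hv with hv | hv
    · obtain ⟨t, -, ht⟩ := Finset.mem_image.mp hv
      exact Or.inr (Or.inr (Or.inl ⟨t, ht⟩))
    · obtain ⟨t, -, ht⟩ := Finset.mem_image.mp hv
      exact Or.inr (Or.inr (Or.inr ⟨t, ht⟩))
  -- every non-source vertex has an incoming edge
  have hin : ∀ v ∈ G.verts, v ≠ s → ∃ u', G.adj u' v ∧ u' ∈ G.verts := by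
    intro v hv hvs
    rcases hcases v hv with h | h | ⟨t, ht⟩ | ⟨t, ht⟩
    · exact absurd h hvs
    · rw [h]
      by_cases h1 : (s, e) ∈ G.unl
      · exact ⟨s, Or.inl h1, hsv⟩
      · have h2 := (not_iff_not.mpr (hscond e)).mp h1
        push_neg at h2
        obtain ⟨a, ha1, -⟩ := h2 hev (Ne.symm hse) fun t => (hdist t).2.2.2
        exact ⟨a, Or.inl ha1, (G.unlMem _ ha1).1⟩
    · rw [← ht]
      by_cases h1 : (s, G.St t) ∈ G.unl
      · exact ⟨s, Or.inl h1, hsv⟩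
      · have h2 := (not_iff_not.mpr (hscond (G.St t))).mp h1
        push_neg at h2
        obtain ⟨a, ha1, -⟩ := h2 (G.stMem t) (hdist t).1 fun t' => Ne.symm (hSE t t')
        exact ⟨a, Or.inl ha1, (G.unlMem _ ha1).1⟩
    · rw [← ht]
      exact ⟨G.St t, AOE.adj_task t, G.stMem t⟩
  -- every non-sink vertex has an outgoing edge
  have hout : ∀ v ∈ G.verts, v ≠ e → ∃ w, G.adj v w ∧ w ∈ G.verts := by
    intro v hv hve
    rcases hcases v hv with h | h | ⟨t, ht⟩ | ⟨t, ht⟩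
    · rw [h]
      by_cases h1 : (s, e) ∈ G.unl
      · exact ⟨e, Or.inl h1, hev⟩
      · have h2 := (not_iff_not.mpr (hecond s)).mp h1
        push_neg at h2
        obtain ⟨b, hb1, -⟩ := h2 hsv hse fun t => (hdist t).1
        exact ⟨b, Or.inl hb1, (G.unlMem _ hb1).2⟩
    · exact absurd h hve
    · rw [← ht]
      exact ⟨G.En t, AOE.adj_task t, G.enMem t⟩
    · rw [← ht]
      by_cases h1 : (G.En t, e) ∈ G.unl
      · exact ⟨e, Or.inl h1, hev⟩
      · have h2 := (not_iff_not.mpr (hecond (G.En t))).mp h1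
        push_neg at h2
        obtain ⟨b, hb1, -⟩ := h2 (G.enMem t) (hdist t).2.2.2 fun t' => hSE t' t
        exact ⟨b, Or.inl hb1, (G.unlMem _ hb1).2⟩
  -- the source reaches everything
  have hsrc : ∀ v ∈ G.verts, Relation.ReflTransGen G.adj s v := by
    let r : {x // x ∈ G.verts} → {x // x ∈ G.verts} → Prop :=
      fun x y => Relation.TransGen G.adj x.1 y.1
    letI : IsTrans {x // x ∈ G.verts} r := ⟨fun _ _ _ hab hbc => hab.trans hbc⟩
    letI : IsIrrefl {x // x ∈ G.verts} r := ⟨fun a ha => hac a.1 ha⟩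
    have wf := Finite.wellFounded_of_trans_of_irrefl r
    have key : ∀ x : {x // x ∈ G.verts}, Relation.ReflTransGen G.adj s x.1 := by
      intro x
      induction x using WellFounded.induction wf with
      | _ y ih =>
        by_cases hy : y.1 = s
        · exact hy ▸ Relation.ReflTransGen.refl
        · obtain ⟨u', hu', humem⟩ := hin y.1 y.2 hy
          exact (ih ⟨u', humem⟩ (Relation.TransGen.single hu')).tail hu'
    intro v hv
    exact key ⟨v, hv⟩
  -- everything reaches the sink
  have hsnk : ∀ v ∈ G.verts, Relation.ReflTransGen G.adj v e := by
    let r : {x // x ∈ G.verts} → {x // x ∈ G.verts} → Prop :=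
      fun x y => Relation.TransGen G.adj y.1 x.1
    letI : IsTrans {x // x ∈ G.verts} r := ⟨fun _ _ _ hab hbc => hbc.trans hab⟩
    letI : IsIrrefl {x // x ∈ G.verts} r := ⟨fun a ha => hac a.1 ha⟩
    have wf := Finite.wellFounded_of_trans_of_irrefl r
    have key : ∀ x : {x // x ∈ G.verts}, Relation.ReflTransGen G.adj x.1 e := by
      intro x
      induction x using WellFounded.induction wf with
      | _ y ih =>
        by_cases hy : y.1 = e
        · exact hy ▸ Relation.ReflTransGen.refl
        · obtain ⟨w, hw, hwmem⟩ := hout y.1 y.2 hy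
          exact Relation.ReflTransGen.head hw (ih ⟨w, hwmem⟩ (Relation.TransGen.single hw))
    intro v hv
    exact key ⟨v, hv⟩
  refine ⟨hac, ?_, ?_⟩
  · -- K3out
    intro a b hab
    by_cases has : a = s
    · subst has
      exact Or.inr fun w hw => hsrc w hw
    · refine Or.inl ?_
      by_cases hbe : b = e
      · subst hbe
        obtain ⟨hav, hane, hnSt, -⟩ := (hecond a).mp hab
        rcases hcases a hav with h | h | ⟨t, ht⟩ | ⟨t, ht⟩
        · exact absurd h has
        · exact absurd h hane
        · exact absurd ht (hnSt t)
        · exact ⟨t, ht⟩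
      · exact (hgen a b hab has hbe).1
  · -- K3in
    intro a b hab
    by_cases hbe : b = e
    · subst hbe
      exact Or.inr fun w hw => hsnk w hw
    · refine Or.inl ?_
      by_cases has : a = s
      · subst has
        obtain ⟨hbv, hbns, hnEn, -⟩ := (hscond b).mp hab
        rcases hcases b hbv with h | h | ⟨t, ht⟩ | ⟨t, ht⟩
        · exact absurd h hbns
        · exact absurd h hbe
        · exact ⟨t, ht⟩
        · exact absurd ht (hnEn t)
      · exact (hgen a b hab has hbe).2

end Dev5

section Dev6
variable {V T : Type} [DecidableEq V]

lemma LB1 {A : AOE V T} (hac : A.Acyclic) {w p q : V}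
    (hwp : Relation.ReflTransGen A.adj w p) (hpq : A.adj p q) (hne : w ≠ p) :
    Relation.TransGen (A.delUnl w q).adj w q := by
  have hnq : ∀ {b : V}, Relation.ReflTransGen A.adj b p → b ≠ q := by
    intro b hb hbq
    subst hbq
    exact hac b (Relation.TransGen.tail' hb hpq)
  have hlift : ∀ {a : V}, Relation.ReflTransGen A.adj a p →
      Relation.ReflTransGen (A.delUnl w q).adj a p := by
    intro a h
    induction h using Relation.ReflTransGen.head_induction_on with
    | refl => exact .refl
    | head h' hsuf ih =>
      refine Relation.ReflTransGen.head (adj_delUnl_of_ne h' ?_) ih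
      intro he
      exact hnq hsuf (congrArg Prod.snd he)
  refine Relation.TransGen.tail' (hlift hwp) (adj_delUnl_of_ne hpq ?_)
  intro he
  exact hne (congrArg Prod.fst he).symm

lemma LB2 {A : AOE V T} (hac : A.Acyclic) {p q w' : V}
    (hpq : A.adj p q) (hqw : Relation.ReflTransGen A.adj q w') (hne : q ≠ w') :
    Relation.TransGen (A.delUnl p w').adj p w' := by
  have hnp : ∀ {b : V}, Relation.ReflTransGen A.adj q b → b ≠ p := by
    intro b hb hbp
    subst hbp
    exact hac q (Relation.TransGen.tail' hb hpq)
  have hlift : ∀ {b : V}, Relation.ReflTransGen A.adj q b →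
      Relation.ReflTransGen (A.delUnl p w').adj q b := by
    intro b h
    induction h with
    | refl => exact .refl
    | tail hpre h2 ih =>
      refine ih.tail (adj_delUnl_of_ne h2 ?_)
      intro he
      exact hnp hpre (congrArg Prod.fst he)
  exact Relation.TransGen.head' (adj_delUnl_of_ne hpq
    (fun he => hne (congrArg Prod.snd he))) (hlift hqw)

end Dev6

/-- For an output AOE `A` and an optimal AOE `Opt ≡ A`: if the end vertex
of `T` differs from the start vertex of `T'` in `A`, the same holds in `Opt`. -/
theorem stmt10 {V W T : Type} [DecidableEq V] [Fintype T]
    (G A : AOE V T) (hA : IsOutput G A)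
    (Opt : AOE W T) (hAc : Opt.Acyclic) (hOpt : Optimal Opt) (hEq : AOE.Equiv A Opt) :
    ∀ t t' : T, t ≠ t' → A.En t ≠ A.St t' → Opt.En t ≠ Opt.St t' := by
  intro t t' htt' hAne hOptEq
  obtain ⟨hCan, hSteps, hNoStep⟩ := hA
  obtain ⟨hAac, hK3o, hK3i⟩ := steps_inv hSteps (canonical_inv hCan)
  have hEq' : ∀ l, Opt.critPath l ↔ A.critPath l := fun l => (hEq l).symm
  have htransAO : ∀ {a b : T}, a ≠ b → A.reach a b → Opt.reach a b :=
    fun hab h => reach_transfer hAac hEq hab h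
  have htransOA : ∀ {a b : T}, a ≠ b → Opt.reach a b → A.reach a b :=
    fun hab h => reach_transfer hAc hEq' hab h
  have hPA : Relation.ReflTransGen A.adj (A.En t) (A.St t') := by
    refine htransOA htt' ?_
    show Relation.ReflTransGen Opt.adj (Opt.En t) (Opt.St t')
    rw [hOptEq]
  have hcycA : ∀ s : T, Relation.ReflTransGen A.adj (A.En s) (A.St s) → False :=
    fun s h => hAac _ (Relation.TransGen.tail' h (AOE.adj_task s))
  have hcycO : ∀ s : T, Relation.ReflTransGen Opt.adj (Opt.En s) (Opt.St s) → False :=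
    fun s h => hAc _ (Relation.TransGen.tail' h (AOE.adj_task s))
  have STAR : ∀ s r : T, Relation.ReflTransGen A.adj (A.En s) (A.St t') →
      Relation.ReflTransGen A.adj (A.En t) (A.St r) →
      s ≠ r ∧ Relation.ReflTransGen A.adj (A.En s) (A.St r) := by
    intro s r hs hr
    by_cases hst' : s = t'
    · exact (hcycA t' (hst' ▸ hs)).elim
    by_cases hrt : r = t
    · exact (hcycA t (hrt ▸ hr)).elim
    have os : Relation.ReflTransGen Opt.adj (Opt.En s) (Opt.St t') := by
      by_cases hst : s = t
      · rw [hst, hOptEq]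
      · exact htransAO hst' hs
    have og : Relation.ReflTransGen Opt.adj (Opt.En t) (Opt.St r) := by
      by_cases hrt' : r = t'
      · rw [hrt', ← hOptEq]
      · exact htransAO (fun h => hrt h.symm) hr
    have oc : Relation.ReflTransGen Opt.adj (Opt.En s) (Opt.St r) :=
      os.trans (by rw [← hOptEq]; exact og)
    have hsr : s ≠ r := by rintro rfl; exact hcycO s oc
    refine ⟨hsr, ?_⟩
    by_cases hst : s = t
    · rw [hst]; exact hr
    by_cases hrt' : r = t'
    · rw [hrt']; exact hs
    · exact htransOA hsr oc
  rcases hPA.cases_head with heq0 | ⟨v1, hadj1, hv1⟩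
  · exact hAne heq0
  rcases hadj1 with hunl1 | ⟨s0, hs0, he0⟩
  · -- first edge is unlabeled
    have hR2 : ∀ u v, ¬ Rule2Cond A u v := fun u v hc => hNoStep _ (Step.rule2 u v hc)
    have hR3 : ∀ u v, ¬ Rule3Cond A u v := fun u v hc => hNoStep _ (Step.rule3 u v hc)
    have hInData : ∀ {w : V}, A.adj w v1 → (∀ z ∈ A.verts, Relation.ReflTransGen A.adj w z) ∨
        ∃ s, Relation.ReflTransGen A.adj (A.En s) (A.St t') ∧
          Relation.ReflTransGen A.adj w (A.En s) := by
      intro w hw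
      rcases hw with hw | ⟨s, hws, hwe⟩
      · rcases hK3o w v1 hw with ⟨s, hs⟩ | hra
        · refine Or.inr ⟨s, ?_, ?_⟩
          · rw [hs]; exact Relation.ReflTransGen.head (Or.inl hw) hv1
          · rw [hs]
        · exact Or.inl hra
      · refine Or.inr ⟨s, ?_, ?_⟩
        · rw [hwe]; exact hv1
        · rw [← hws]; exact Relation.ReflTransGen.single (AOE.adj_task s)
    have hOutData : ∀ {z : V}, A.adj (A.En t) z →
        (∀ w ∈ A.verts, Relation.ReflTransGen A.adj w z) ∨
        ∃ r, Relation.ReflTransGen A.adj (A.En t) (A.St r) ∧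
          Relation.ReflTransGen A.adj (A.St r) z := by
      intro z hz
      rcases hz with hz | ⟨r, hrs, hre⟩
      · rcases hK3i (A.En t) z hz with ⟨r, hr⟩ | hra
        · refine Or.inr ⟨r, ?_, ?_⟩
          · rw [hr]; exact Relation.ReflTransGen.single (Or.inl hz)
          · rw [hr]
        · exact Or.inl hra
      · refine Or.inr ⟨r, ?_, ?_⟩
        · rw [hrs]
        · rw [← hre]; exact Relation.ReflTransGen.single (AOE.adj_task r)
    have hii : ¬ Relation.TransGen (A.delUnl (A.En t) v1).adj (A.En t) v1 :=
      fun hp => hR2 _ _ ⟨hunl1, hp⟩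
    have hv : ∀ w z, A.adj w v1 → A.adj (A.En t) z → Relation.ReflTransGen A.adj w z := by
      intro w z hw hz
      rcases hInData hw with hra | ⟨s, hsIn, hws⟩
      · exact hra z (AOE.adj_mem hz).2
      rcases hOutData hz with hra | ⟨r, hrOut, hrz⟩
      · exact hra w (AOE.adj_mem hw).1
      exact (hws.trans (STAR s r hsIn hrOut).2).trans hrz
    have hiii : (∃ s, A.St s = A.En t) →
        (∀ r, A.En r ≠ v1) ∧ ∀ w, (w, v1) ∈ A.unl → w = A.En t := by
      rintro ⟨s1, hs1⟩
      have hOut0 : Relation.ReflTransGen A.adj (A.En t) (A.St s1) := by rw [hs1]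
      constructor
      · intro r hre
        have hIn0 : Relation.ReflTransGen A.adj (A.En r) (A.St t') := by rw [hre]; exact hv1
        have h2 := (STAR r s1 hIn0 hOut0).2
        rw [hre, hs1] at h2
        exact hAac v1 (Relation.TransGen.tail' h2 (Or.inl hunl1))
      · intro w hwv1
        by_contra hwne
        have hwreach : Relation.ReflTransGen A.adj w (A.En t) := by
          rcases hInData (Or.inl hwv1 : A.adj w v1) with hra | ⟨s, hsIn, hws⟩
          · exact hra _ (A.enMem t)
          · have h2 := (STAR s s1 hsIn hOut0).2
            rw [hs1] at h2
            exact hws.trans h2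
        exact hR2 w v1 ⟨hwv1, LB1 hAac hwreach (Or.inl hunl1) hwne⟩
    have hiv : (∃ r, A.En r = v1) →
        (∀ s, A.St s ≠ A.En t) ∧ ∀ w', (A.En t, w') ∈ A.unl → w' = v1 := by
      rintro ⟨r1, hr1⟩
      have hIn0 : Relation.ReflTransGen A.adj (A.En r1) (A.St t') := by rw [hr1]; exact hv1
      constructor
      · intro s hs1
        have hOut0 : Relation.ReflTransGen A.adj (A.En t) (A.St s) := by rw [hs1]
        have h2 := (STAR r1 s hIn0 hOut0).2
        rw [hr1, hs1] at h2
        exact hAac v1 (Relation.TransGen.tail' h2 (Or.inl hunl1))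
      · intro w' hw'
        by_contra hw'ne
        have hreach : Relation.ReflTransGen A.adj v1 w' := by
          rcases hOutData (Or.inl hw' : A.adj (A.En t) w') with hra | ⟨r, hrOut, hrz⟩
          · exact hra _ (A.unlMem _ hunl1).2
          · have h2 := (STAR r1 r hIn0 hrOut).2
            rw [hr1] at h2
            exact h2.trans hrz
        exact hR2 _ _ ⟨hw', LB2 hAac (Or.inl hunl1) hreach (fun h => hw'ne h.symm)⟩
    exact hR3 _ _ ⟨hunl1, hii, hiii, hiv, hv⟩
  · -- first edge is a task edge s0
    have hIn : Relation.ReflTransGen A.adj (A.En s0) (A.St t') := by rw [he0]; exact hv1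
    have hOut : Relation.ReflTransGen A.adj (A.En t) (A.St s0) := by rw [hs0]
    exact (STAR s0 s0 hIn hOut).1 rfl

end AOEPaper
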